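/- With F, G, h* as above and G⁻¹ the right-continuous inverse of G, the identity E[B]·h*(x) = exp(∫_{G⁻¹(F(x))}^{x} h*(t) dt) holds for all x in the interior of the support, provided F is continuous and strictly increasing there. -/

import Mathlib

open Filter Set MeasureTheory
open scoped Topology

/-- The equilibrium failure rate `h*(x) = F̄(x) / (EB · Ḡ(x)) = F̄(x) / ∫ₓ^∞ F̄(t) dt`. -/
noncomputable def hstar (F : ℝ → ℝ) (x : ℝ) : ℝ :=
  (1 - F x) / (∫ t in Set.Ioi x, (1 - F t))

/-- The equilibrium distribution function `G(x) = (1/EB) ∫₀ˣ F̄(t) dt`. -/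
noncomputable def eqG (F : ℝ → ℝ) (EB : ℝ) (x : ℝ) : ℝ :=
  (∫ t in Set.Ioc (0 : ℝ) x, (1 - F t)) / EB

/-- The right-continuous inverse `G⁻¹(y) = inf {x : G(x) ≥ y}`. -/
noncomputable def eqGinv (F : ℝ → ℝ) (EB : ℝ) (y : ℝ) : ℝ :=
  sInf {x : ℝ | y ≤ eqG F EB x}

/-- For a nonnegative random variable with c.d.f. `F` (with `F 0 = 0` and
finite positive mean `EB`) that is continuous and strictly increasing on an interval
`(a, b)` in the interior of its support, the identity
`EB · h*(x) = exp (∫_{G⁻¹(F x)}^{x} h*(t) dt)` holds for all `x ∈ (a, b)`. -/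
theorem stmt7 (F : ℝ → ℝ) (hmono : Monotone F) (hF0 : F 0 = 0)
    (hFnn : ∀ x, 0 ≤ F x) (hFle : ∀ x, F x ≤ 1)
    (EB : ℝ) (hEBpos : 0 < EB)
    (hInt : IntegrableOn (fun t => 1 - F t) (Set.Ioi 0))
    (hEB : EB = ∫ t in Set.Ioi (0 : ℝ), (1 - F t))
    (a b : ℝ) (hab : a < b) (hco : ContinuousOn F (Set.Ioo a b))
    (hsm : StrictMonoOn F (Set.Ioo a b))
    (hsupp : ∀ x ∈ Set.Ioo a b, 0 < F x ∧ F x < 1) :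
    ∀ x ∈ Set.Ioo a b,
      EB * hstar F x = Real.exp (∫ t in eqGinv F EB (F x)..x, hstar F t) := by
  intro x hx
  obtain ⟨hax, hxb⟩ := hx
  obtain ⟨hFxpos, hFxlt⟩ := hsupp x ⟨hax, hxb⟩
  -- notation
  set f : ℝ → ℝ := fun t => 1 - F t with hfdef
  have hfanti : Antitone f := fun u v huv => by
    simp only [hfdef]; linarith [hmono huv]
  have hfnn : ∀ t, 0 ≤ f t := fun t => by simp only [hfdef]; linarith [hFle t]
  have hfle1 : ∀ t, f t ≤ 1 := fun t => by simp only [hfdef]; linarith [hFnn t]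
  have hfmeas : Measurable f := measurable_const.sub hmono.measurable
  -- integrability on every Ioi
  have hIoi : ∀ t : ℝ, IntegrableOn f (Ioi t) := by
    intro t
    rcases le_or_gt 0 t with h | h
    · exact hInt.mono_set (Ioi_subset_Ioi h)
    · have h1 : IntegrableOn f (Ioc t 0) := by
        refine Integrable.mono' (g := fun _ => (1:ℝ)) (integrableOn_const measure_Ioc_lt_top.ne)
          hfmeas.aestronglyMeasurable (ae_of_all _ fun s => ?_)
        simp only [Real.norm_eq_abs, abs_le]
        exact ⟨by linarith [hfnn s], by linarith [hfle1 s]⟩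
      have h2 := h1.union hInt
      rwa [Ioc_union_Ioi_eq_Ioi h.le] at h2
  set H : ℝ → ℝ := fun t => ∫ s in Ioi t, f s with hHdef
  have hsplit : ∀ u v : ℝ, u ≤ v → H u = (∫ s in Ioc u v, f s) + H v := by
    intro u v huv
    have hd : Disjoint (Ioc u v) (Ioi v) := by
      rw [Set.disjoint_left]; intro s hs hs'
      exact absurd hs.2 (not_le.2 hs')
    have := setIntegral_union hd measurableSet_Ioi
      ((hIoi u).mono_set Ioc_subset_Ioi_self) (hIoi v)
    rw [Ioc_union_Ioi_eq_Ioi huv] at this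
    exact this
  have hHanti : Antitone H := by
    intro u v huv
    have h0 : 0 ≤ ∫ s in Ioc u v, f s :=
      setIntegral_nonneg measurableSet_Ioc fun s _ => hfnn s
    have := hsplit u v huv
    linarith
  have hfII : ∀ u v : ℝ, IntervalIntegrable f volume u v := fun u v =>
    hfanti.intervalIntegrable
  have hkey : ∀ t : ℝ, H t = H 0 - ∫ s in (0:ℝ)..t, f s := by
    intro t
    rcases le_total 0 t with h | h
    · rw [intervalIntegral.integral_of_le h]
      have := hsplit 0 t h
      linarith
    · rw [intervalIntegral.integral_of_ge h]
      have := hsplit t 0 h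
      linarith
  have hHcont : Continuous H := by
    have h1 : Continuous fun t => H 0 - ∫ s in (0:ℝ)..t, f s :=
      continuous_const.sub (intervalIntegral.continuous_primitive hfII 0)
    exact h1.congr fun t => (hkey t).symm
  -- the equilibrium distribution
  have hGdef : ∀ u, eqG F EB u = (∫ s in Ioc (0:ℝ) u, f s) / EB := fun u => rfl
  have hGcont : Continuous (eqG F EB) := by
    have h1 : Continuous fun u => (max (∫ s in (0:ℝ)..u, f s) 0) / EB :=
      ((intervalIntegral.continuous_primitive hfII 0).max continuous_const).div_const EB
    refine h1.congr fun u => ?_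
    rw [hGdef]
    congr 1
    rcases le_total 0 u with h | h
    · rw [intervalIntegral.integral_of_le h]
      exact max_eq_left (setIntegral_nonneg measurableSet_Ioc fun s _ => hfnn s)
    · rw [intervalIntegral.integral_of_ge h, Ioc_eq_empty (not_lt.2 h)]
      simp only [Measure.restrict_empty, integral_zero_measure]
      exact max_eq_right (neg_nonpos.2
        (setIntegral_nonneg measurableSet_Ioc fun s _ => hfnn s))
  have hGzero : ∀ u : ℝ, u ≤ 0 → eqG F EB u = 0 := by
    intro u hu
    rw [hGdef, Ioc_eq_empty (not_lt.2 hu)]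
    simp
  -- the set defining the inverse
  set S : Set ℝ := {u : ℝ | F x ≤ eqG F EB u} with hSdef
  have hGtend : Tendsto (eqG F EB) atTop (𝓝 1) := by
    have h1 : Tendsto (fun u : ℝ => ∫ s in (0:ℝ)..u, f s) atTop (𝓝 (∫ s in Ioi (0:ℝ), f s)) :=
      intervalIntegral_tendsto_integral_Ioi 0 (hIoi 0) tendsto_id
    have h2 : Tendsto (fun u : ℝ => (∫ s in (0:ℝ)..u, f s) / EB) atTop
        (𝓝 ((∫ s in Ioi (0:ℝ), f s) / EB)) := h1.div_const EB
    have h3 : (∫ s in Ioi (0:ℝ), f s) / EB = 1 := by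
      rw [← hEB]; exact div_self hEBpos.ne'
    rw [h3] at h2
    refine h2.congr' ?_
    filter_upwards [eventually_ge_atTop (0:ℝ)] with u hu
    rw [hGdef, intervalIntegral.integral_of_le hu]
  have hSne : S.Nonempty := by
    have := (hGtend.eventually (eventually_ge_nhds hFxlt)).exists
    exact this
  have hSsub : S ⊆ Ioi 0 := by
    intro u hu
    by_contra h
    rw [mem_Ioi, not_lt] at h
    rw [hSdef, mem_setOf_eq, hGzero u h] at hu
    linarith
  have hSbdd : BddBelow S := ⟨0, fun u hu => (hSsub hu).le⟩
  have hSclosed : IsClosed S := isClosed_le continuous_const hGcont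
  set c : ℝ := eqGinv F EB (F x) with hcdef
  have hcS : c ∈ S := hSclosed.csInf_mem hSne hSbdd
  have hcpos : 0 < c := hSsub hcS
  have hGc : eqG F EB c = F x := by
    refine le_antisymm ?_ hcS
    by_contra h
    rw [not_le] at h
    have h1 : ∀ᶠ u in 𝓝 c, F x ≤ eqG F EB u :=
      (hGcont.tendsto c).eventually (eventually_ge_nhds h)
    have h2 : ∀ᶠ u in 𝓝[<] c, F x ≤ eqG F EB u := h1.filter_mono nhdsWithin_le_nhds
    obtain ⟨u, huS, hult⟩ := (h2.and self_mem_nhdsWithin).exists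
    exact absurd (csInf_le hSbdd huS) (not_le.2 hult)
  have hHc : H c = EB * (1 - F x) := by
    have h1 := hsplit 0 c hcpos.le
    have h2 : (∫ s in Ioc (0:ℝ) c, f s) = EB * F x := by
      have := hGc
      rw [hGdef] at this
      field_simp at this
      linarith
    have h3 : H 0 = EB := by rw [hHdef]; exact hEB.symm
    rw [h3, h2] at h1
    linarith
  have hHcpos : 0 < H c := by
    rw [hHc]
    have : 0 < 1 - F x := by linarith
    exact mul_pos hEBpos this
  -- positivity of H at x
  have hHxpos : 0 < H x := by
    set t₀ : ℝ := (x + b) / 2 with ht₀def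
    have hxt₀ : x < t₀ := by rw [ht₀def]; linarith
    have ht₀b : t₀ < b := by rw [ht₀def]; linarith
    have hat₀ : a < t₀ := by rw [ht₀def]; linarith
    have hFt₀ : F t₀ < 1 := (hsupp t₀ ⟨hat₀, ht₀b⟩).2
    have hmeasIoc : volume (Ioc x t₀) ≠ ⊤ := measure_Ioc_lt_top.ne
    have hlow : (1 - F t₀) * (volume (Ioc x t₀)).toReal ≤ ∫ s in Ioc x t₀, f s := by
      refine setIntegral_ge_of_const_le_real measurableSet_Ioc hmeasIoc (fun s hs => ?_)
        ((hIoi x).mono_set Ioc_subset_Ioi_self)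
      simp only [hfdef]
      linarith [hmono hs.2]
    have hvol : (volume (Ioc x t₀)).toReal = t₀ - x := by
      rw [Real.volume_Ioc, ENNReal.toReal_ofReal (by linarith)]
    have hup : (∫ s in Ioc x t₀, f s) ≤ H x :=
      setIntegral_mono_set (hIoi x) (ae_of_all _ fun s => hfnn s)
        (ae_of_all _ (Ioc_subset_Ioi_self : Ioc x t₀ ⊆ Ioi x))
    have : 0 < (1 - F t₀) * (t₀ - x) := by nlinarith
    rw [hvol] at hlow
    linarith
  -- positivity on the interval
  have hHpos : ∀ t ∈ Icc (min c x) (max c x), 0 < H t := by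
    intro t ht
    have h1 : t ≤ max c x := ht.2
    have h2 := hHanti h1
    rcases max_choice c x with hm | hm <;> rw [hm] at h2 <;> linarith
  have huIcc : uIcc c x = Icc (min c x) (max c x) := by
    rw [Set.uIcc]
  -- the right-limit version of the integrand
  set rF : ℝ → ℝ := Function.rightLim F with hrFdef
  set φ : ℝ → ℝ := fun t => (1 - rF t) / H t with hφdef
  -- derivative of -log H
  have hderiv : ∀ t ∈ Ioo (min c x) (max c x),
      HasDerivWithinAt (fun u => -Real.log (H u)) (φ t) (Ioi t) t := by
    intro t ht
    have hHt : 0 < H t := hHpos t ⟨ht.1.le, ht.2.le⟩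
    have hP : HasDerivWithinAt (fun u => ∫ s in (0:ℝ)..u, f s) (1 - rF t) (Ici t) t := by
      refine intervalIntegral.integral_hasDerivWithinAt_of_tendsto_ae_right
        (hfII 0 t) (s := Ici t) (t := Ioi t)
        ⟨univ, univ_mem, (hfmeas.stronglyMeasurable.aestronglyMeasurable).restrict⟩ ?_
      exact (tendsto_const_nhds.sub (hmono.tendsto_rightLim t)).mono_left inf_le_left
    have hHd : HasDerivWithinAt H (-(1 - rF t)) (Ici t) t := by
      have h2 := ((hasDerivWithinAt_const t (Ici t) (H 0)).sub hP).congr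
        (fun u _ => hkey u) (hkey t)
      simpa using h2
    have hlog : HasDerivWithinAt (fun u => Real.log (H u)) (-(1 - rF t) / H t) (Ici t) t :=
      hHd.log hHt.ne'
    have hneg := hlog.neg
    have heq : -(-(1 - rF t) / H t) = φ t := by
      rw [hφdef]; ring
    rw [heq] at hneg
    exact hneg.mono Ioi_subset_Ici_self
  -- continuity of -log H on the interval
  have hLcont : ContinuousOn (fun u => -Real.log (H u)) (uIcc c x) := by
    refine (ContinuousOn.neg ?_)
    refine Real.continuousOn_log.comp hHcont.continuousOn ?_
    intro t ht
    rw [huIcc] at ht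
    exact (hHpos t ht).ne'
  -- a.e. equality of hstar and φ
  have hD : {t : ℝ | ¬ContinuousAt F t}.Countable := hmono.countable_not_continuousAt
  have hae : ∀ᵐ t : ℝ, hstar F t = φ t := by
    have hnull : volume {t : ℝ | ¬ContinuousAt F t} = 0 := hD.measure_zero _
    filter_upwards [measure_eq_zero_iff_ae_notMem.1 hnull] with t ht
    have hct : ContinuousAt F t := by
      by_contra h
      exact ht h
    have hr : rF t = F t :=
      hmono.continuousWithinAt_Ioi_iff_rightLim_eq.1 hct.continuousWithinAt
    simp only [hφdef, hr]
    rfl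
  -- interval integrability
  have hstarII : IntervalIntegrable (hstar F) volume c x := by
    have h1 : ContinuousOn (fun t => (H t)⁻¹) (uIcc c x) := by
      refine ContinuousOn.inv₀ hHcont.continuousOn fun t ht => ?_
      rw [huIcc] at ht
      exact (hHpos t ht).ne'
    have h0 : IntervalIntegrable f volume c x := hfanti.intervalIntegrable
    have h2 := h0.mul_continuousOn h1
    refine h2.congr ?_
    refine fun t _ => ?_
    simp only [hstar, hfdef, div_eq_mul_inv]
    rfl
  have hφII : IntervalIntegrable φ volume c x := by
    rw [intervalIntegrable_iff] at hstarII ⊢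
    exact hstarII.congr (ae_restrict_of_ae hae)
  -- the FTC computation
  have hFTC : ∫ t in c..x, φ t = -Real.log (H x) - -Real.log (H c) :=
    intervalIntegral.integral_eq_sub_of_hasDeriv_right hLcont hderiv hφII
  have hintcongr : ∫ t in c..x, hstar F t = ∫ t in c..x, φ t := by
    refine intervalIntegral.integral_congr_ae ?_
    filter_upwards [hae] with t h _
    exact h
  rw [hintcongr, hFTC]
  have hsub : -Real.log (H x) - -Real.log (H c) = Real.log (H c) - Real.log (H x) := by ring
  rw [hsub, Real.exp_sub, Real.exp_log hHcpos, Real.exp_log hHxpos, hHc]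
  show EB * ((1 - F x) / (∫ t in Set.Ioi x, (1 - F t))) = EB * (1 - F x) / H x
  rw [mul_div_assoc]
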